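/- Let ψ be a fixed real number with -π/2 < ψ < π/2, let ν be a complex number with arg ν ∈ (-ψ - π/2, -ψ + π/2), and let w be a complex number with Re(w) > 0. Then Γ(w)/ν^w = ∫_0^{∞ e^{iψ}} e^{-νt} t^{w-1} dt, where the integral is taken along the ray {r e^{iψ} : r > 0} from 0 to ∞ e^{iψ}. -/

import Mathlib

open Complex Set MeasureTheory

namespace GammaRayAux


lemma norm_integrand {z : ℂ} {t : ℝ} (ht : 0 < t) (w : ℂ) :
    ‖Complex.exp (-z * t) * (t : ℂ) ^ (w - 1)‖ =
      Real.exp (-z.re * t) * t ^ (w.re - 1) := by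
  rw [norm_mul, Complex.norm_exp,
    norm_cpow_eq_rpow_re_of_pos ht, sub_re, one_re]
  congr 2
  simp [Complex.mul_re]

lemma integrable_bound {a b : ℝ} (ha : -1 < a) (hb : 0 < b) :
    IntegrableOn (fun t : ℝ => Real.exp (-b * t) * t ^ a) (Ioi 0) := by
  have h := integrableOn_rpow_mul_exp_neg_mul_rpow ha zero_lt_one hb
  simp_rw [Real.rpow_one] at h
  exact h.congr_fun (fun t _ => mul_comm _ _) measurableSet_Ioi

lemma contOn_cpow (w : ℂ) : ContinuousOn (fun t : ℝ => (t : ℂ) ^ (w - 1)) (Ioi 0) :=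
  fun t ht =>
    ((continuousAt_cpow_const (Complex.ofReal_mem_slitPlane.2 ht)).comp
      Complex.continuous_ofReal.continuousAt).continuousWithinAt

lemma aesm (z w : ℂ) :
    AEStronglyMeasurable (fun t : ℝ => Complex.exp (-z * t) * (t : ℂ) ^ (w - 1))
      (volume.restrict (Ioi 0)) :=
  (((Complex.continuous_exp.comp (continuous_const.mul Complex.continuous_ofReal)).continuousOn).mul
    (contOn_cpow w)).aestronglyMeasurable measurableSet_Ioi

lemma intOn {z : ℂ} (hz : 0 < z.re) {w : ℂ} (hw : 0 < w.re) :
    IntegrableOn (fun t : ℝ => Complex.exp (-z * t) * (t : ℂ) ^ (w - 1)) (Ioi 0) := by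
  refine (integrable_bound (by linarith : (-1:ℝ) < w.re - 1) hz).mono' (aesm z w) ?_
  filter_upwards [ae_restrict_mem measurableSet_Ioi] with t ht
  exact le_of_eq (norm_integrand ht w)

lemma F_hasDeriv {w : ℂ} (hw : 0 < w.re) {z₀ : ℂ} (hz₀ : 0 < z₀.re) :
    HasDerivAt (fun z : ℂ => ∫ t in Ioi (0:ℝ), Complex.exp (-z * t) * (t : ℂ) ^ (w - 1))
      (∫ t in Ioi (0:ℝ), Complex.exp (-z₀ * t) * -(t : ℂ) * (t : ℂ) ^ (w - 1)) z₀ := by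
  set ε : ℝ := z₀.re / 2 with hε
  have hε0 : 0 < ε := by positivity
  have hball : ∀ z ∈ Metric.ball z₀ ε, ε < z.re := by
    intro z hz
    have h1 : |(z - z₀).re| ≤ ‖z - z₀‖ := Complex.abs_re_le_norm _
    rw [Metric.mem_ball, Complex.dist_eq] at hz
    have : -(ε) < (z - z₀).re := by
      have := neg_abs_le (z - z₀).re
      linarith [lt_of_le_of_lt h1 hz]
    have hre : (z - z₀).re = z.re - z₀.re := by simp [Complex.sub_re]
    rw [hre] at this
    simp only [hε] at this ⊢
    linarith
  have key := hasDerivAt_integral_of_dominated_loc_of_deriv_le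
    (μ := volume.restrict (Ioi (0:ℝ)))
    (F := fun (z : ℂ) (t : ℝ) => Complex.exp (-z * t) * (t : ℂ) ^ (w - 1))
    (F' := fun (z : ℂ) (t : ℝ) => Complex.exp (-z * t) * -(t : ℂ) * (t : ℂ) ^ (w - 1))
    (x₀ := z₀) (bound := fun t : ℝ => Real.exp (-ε * t) * t ^ w.re) (Metric.ball_mem_nhds z₀ hε0)
    (Filter.Eventually.of_forall fun z => aesm z w) (intOn hz₀ hw)
    ?_ ?_ ?_ ?_
  · exact key.2
  · -- AESM of F' z₀
    exact ((((Complex.continuous_exp.comp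
        (continuous_const.mul Complex.continuous_ofReal)).mul
        Complex.continuous_ofReal.neg).continuousOn).mul
        (contOn_cpow w)).aestronglyMeasurable measurableSet_Ioi
  · -- bound
    filter_upwards [ae_restrict_mem measurableSet_Ioi] with t ht
    intro z hz
    have hnorm : ‖Complex.exp (-z * t) * -(t : ℂ) * (t : ℂ) ^ (w - 1)‖ =
        Real.exp (-z.re * t) * (t * t ^ (w.re - 1)) := by
      rw [mul_comm (Complex.exp (-z * t)) (-(t:ℂ)), mul_assoc, norm_mul,
        norm_integrand ht w, norm_neg, Complex.norm_real, Real.norm_of_nonneg ht.le]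
      ring
    rw [hnorm]
    have ht' : t * t ^ (w.re - 1) = t ^ w.re := by
      nth_rewrite 1 [← Real.rpow_one t]
      rw [← Real.rpow_add ht]
      norm_num
    rw [ht']
    have hexp : Real.exp (-z.re * t) ≤ Real.exp (-ε * t) := by
      apply Real.exp_le_exp.2
      have h := hball z hz
      have ht0 : (0:ℝ) < t := ht
      nlinarith
    exact mul_le_mul_of_nonneg_right hexp (Real.rpow_nonneg ht.le _)
  · exact integrable_bound (by linarith : (-1:ℝ) < w.re) hε0
  · -- derivatives
    filter_upwards [ae_restrict_mem measurableSet_Ioi] with t _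
    intro z _
    have h1 : HasDerivAt (fun z : ℂ => -z * t) (-(t:ℂ)) z := by
      simpa using (hasDerivAt_id z).neg.mul_const (t : ℂ)
    exact (h1.cexp.mul_const ((t:ℂ) ^ (w - 1)))

lemma real_case {w : ℂ} (hw : 0 < w.re) {r : ℝ} (hr : 0 < r) :
    (∫ t in Ioi (0:ℝ), Complex.exp (-(r:ℂ) * t) * (t : ℂ) ^ (w - 1)) =
      Complex.Gamma w / (r : ℂ) ^ w := by
  have h := Complex.integral_cpow_mul_exp_neg_mul_Ioi hw hr
  have h2 : (∫ t in Ioi (0:ℝ), Complex.exp (-(r:ℂ) * t) * (t : ℂ) ^ (w - 1)) =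
      ∫ t in Ioi (0:ℝ), (t : ℂ) ^ (w - 1) * Complex.exp (-((r:ℂ) * t)) := by
    refine setIntegral_congr_fun measurableSet_Ioi fun t _ => ?_
    rw [neg_mul]
    exact mul_comm _ _
  rw [h2, h, one_div, inv_cpow _ _ (by
      rw [Complex.arg_ofReal_of_nonneg hr.le]; exact Ne.symm Real.pi_ne_zero),
    mul_comm, div_eq_mul_inv]

lemma key {w : ℂ} (hw : 0 < w.re) {z : ℂ} (hz : 0 < z.re) :
    (∫ t in Ioi (0:ℝ), Complex.exp (-z * t) * (t : ℂ) ^ (w - 1)) =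
      Complex.Gamma w / z ^ w := by
  set U : Set ℂ := {z : ℂ | 0 < z.re} with hU
  have hUo : IsOpen U := isOpen_lt continuous_const Complex.continuous_re
  have hF : AnalyticOnNhd ℂ
      (fun z : ℂ => ∫ t in Ioi (0:ℝ), Complex.exp (-z * t) * (t : ℂ) ^ (w - 1)) U := by
    apply DifferentiableOn.analyticOnNhd _ hUo
    intro z hz
    exact ((F_hasDeriv hw hz).differentiableAt).differentiableWithinAt
  have hG : AnalyticOnNhd ℂ (fun z : ℂ => Complex.Gamma w / z ^ w) U := by
    apply DifferentiableOn.analyticOnNhd _ hUo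
    intro z hz
    have hz' : 0 < z.re := hz
    have hz0 : z ≠ 0 := fun h => by rw [h] at hz'; simp at hz'
    have hd : DifferentiableAt ℂ (fun z : ℂ => z ^ w) z :=
      differentiableAt_id.cpow (differentiableAt_const w) (Or.inl hz)
    exact ((differentiableAt_const (Complex.Gamma w)).div hd
      (by simp [Complex.cpow_eq_zero_iff, hz0])).differentiableWithinAt
  have hpre : IsPreconnected U := (convex_halfSpace_re_gt 0).isPreconnected
  have h1 : (1:ℂ) ∈ U := by simp [hU]
  have freq : ∃ᶠ x in nhdsWithin (1:ℂ) {(1:ℂ)}ᶜ,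
      (∫ t in Ioi (0:ℝ), Complex.exp (-x * t) * (t : ℂ) ^ (w - 1)) =
        Complex.Gamma w / x ^ w := by
    have htend : Filter.Tendsto (fun n : ℕ => ((1 + ((n:ℝ)+1)⁻¹ : ℝ) : ℂ)) Filter.atTop
        (nhdsWithin (1:ℂ) {(1:ℂ)}ᶜ) := by
      apply tendsto_nhdsWithin_of_tendsto_nhds_of_eventually_within
      · have : Filter.Tendsto (fun n : ℕ => (1 + ((n:ℝ)+1)⁻¹ : ℝ)) Filter.atTop (nhds 1) := by
          have := tendsto_one_div_add_atTop_nhds_zero_nat (𝕜 := ℝ)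
          simp_rw [one_div] at this
          simpa using tendsto_const_nhds.add this
        have h2 := (Complex.continuous_ofReal.tendsto 1).comp this
        simpa [Function.comp_def] using h2
      · refine Filter.Eventually.of_forall fun n => ?_
        simp only [mem_compl_iff, mem_singleton_iff]
        intro h
        rw [show (1:ℂ) = ((1:ℝ):ℂ) by norm_num, Complex.ofReal_inj] at h
        have : (0:ℝ) < ((n:ℝ)+1)⁻¹ := by positivity
        linarith
    refine htend.frequently (Filter.Frequently.of_forall fun n => ?_)
    exact real_case hw (show (0:ℝ) < 1 + ((n:ℝ)+1)⁻¹ by positivity)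
  exact hF.eqOn_of_preconnected_of_frequently_eq hG hpre h1 freq hz

lemma real_mul_cpow {r : ℝ} (hr : 0 < r) {z : ℂ} (hz : z ≠ 0) (s : ℂ) :
    ((r : ℂ) * z) ^ s = (r : ℂ) ^ s * z ^ s := by
  rw [Complex.cpow_def_of_ne_zero (mul_ne_zero (Complex.ofReal_ne_zero.2 hr.ne') hz),
    Complex.cpow_def_of_ne_zero (Complex.ofReal_ne_zero.2 hr.ne'),
    Complex.cpow_def_of_ne_zero hz, Complex.log_ofReal_mul hr hz,
    Complex.ofReal_log hr.le, add_mul, Complex.exp_add]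

lemma re_ofReal_mul_exp (a θ : ℝ) :
    ((a : ℂ) * Complex.exp ((θ : ℂ) * Complex.I)).re = a * Real.cos θ := by
  rw [Complex.exp_mul_I]
  simp [Complex.mul_re, Complex.cos_ofReal_re, Complex.cos_ofReal_im,
    Complex.sin_ofReal_re, Complex.sin_ofReal_im]

lemma mul_cpow_arg {a b : ℂ} (ha : a ≠ 0) (hb : b ≠ 0)
    (h : a.arg + b.arg ∈ Set.Ioc (-Real.pi) Real.pi) (s : ℂ) :
    (a * b) ^ s = a ^ s * b ^ s := by
  rw [Complex.cpow_def_of_ne_zero (mul_ne_zero ha hb), Complex.cpow_def_of_ne_zero ha,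
    Complex.cpow_def_of_ne_zero hb, Complex.log_mul ha hb h, add_mul, Complex.exp_add]

end GammaRayAux

/-- Gamma integral along the ray of angle `ψ`: for `-π/2 < ψ < π/2`,
`arg ν ∈ (-ψ - π/2, -ψ + π/2)` and `Re w > 0`,
`Γ(w)/ν^w = ∫_0^{∞ e^{iψ}} e^{-νt} t^{w-1} dt`. -/
theorem Gamma_div_cpow_eq_integral_ray (ψ : ℝ) (hψ₁ : -(Real.pi / 2) < ψ)
    (hψ₂ : ψ < Real.pi / 2) (ν : ℂ) (hν₁ : -ψ - Real.pi / 2 < ν.arg)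
    (hν₂ : ν.arg < -ψ + Real.pi / 2) (w : ℂ) (hw : 0 < w.re) :
    Complex.Gamma w / ν ^ w =
      ∫ r in Ioi (0 : ℝ),
        Complex.exp (-ν * (r * Complex.exp (Complex.I * ψ))) *
          (r * Complex.exp (Complex.I * ψ)) ^ (w - 1) * Complex.exp (Complex.I * ψ) := by
  have hpi := Real.pi_pos
  set b : ℂ := Complex.exp (Complex.I * ψ) with hbdef
  have hb : b ≠ 0 := Complex.exp_ne_zero _
  have hw0 : w ≠ 0 := fun h => by rw [h] at hw; simp at hw
  have hbw : b ^ w ≠ 0 := by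
    rw [Ne, Complex.cpow_eq_zero_iff]
    tauto
  have hargb : b.arg = ψ := by
    have hb2 : b = Complex.cos ψ + Complex.sin ψ * Complex.I := by
      rw [hbdef, mul_comm, Complex.exp_mul_I]
    rw [hb2]
    have hmem : ψ ∈ Set.Ioc (-Real.pi) Real.pi := ⟨by linarith, by linarith⟩
    exact Complex.arg_cos_add_sin_mul_I hmem
  have hbsplit : ∀ r : ℝ, 0 < r → ((r : ℂ) * b) ^ (w - 1) * b = (r : ℂ) ^ (w - 1) * b ^ w := by
    intro r hr
    rw [GammaRayAux.real_mul_cpow hr hb]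
    have e2 : b ^ (w - 1) * b = b ^ w := by
      nth_rewrite 2 [← Complex.cpow_one b]
      rw [← Complex.cpow_add _ _ hb]
      norm_num
    rw [mul_assoc, e2]
  rcases eq_or_ne ν 0 with h0 | hν
  · -- ν = 0 case
    rw [h0, Complex.zero_cpow hw0, div_zero]
    have hcongr : (∫ r in Ioi (0 : ℝ),
        Complex.exp (-(0:ℂ) * (r * b)) * ((r : ℂ) * b) ^ (w - 1) * b) =
        ∫ r in Ioi (0 : ℝ), (r : ℂ) ^ (w - 1) * b ^ w := by
      refine setIntegral_congr_fun measurableSet_Ioi fun r hr => ?_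
      rw [neg_zero, zero_mul, Complex.exp_zero, one_mul, hbsplit r hr]
    rw [hcongr]
    symm
    apply integral_undef
    intro hint
    have h2 : IntegrableOn (fun r : ℝ => (r : ℂ) ^ (w - 1)) (Ioi 0) := by
      have h3 := hint.mul_const (b ^ w)⁻¹
      simp_rw [mul_assoc, mul_inv_cancel₀ hbw, mul_one] at h3
      exact h3
    have h3 : IntegrableOn (fun r : ℝ => r ^ (w.re - 1)) (Ioi 1) := by
      have h4 : IntegrableOn (fun r : ℝ => ‖(r : ℂ) ^ (w - 1)‖) (Ioi 1) :=
        (h2.mono_set (Ioi_subset_Ioi zero_le_one)).norm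
      refine h4.congr_fun (fun r hr => ?_) measurableSet_Ioi
      dsimp only
      rw [Complex.norm_cpow_eq_rpow_re_of_pos
        (lt_trans zero_lt_one hr), Complex.sub_re, Complex.one_re]
    rw [integrableOn_Ioi_rpow_iff zero_lt_one] at h3
    linarith
  · -- ν ≠ 0
    have hsum : ν.arg + ψ ∈ Set.Ioo (-(Real.pi/2)) (Real.pi/2) :=
      ⟨by linarith, by linarith⟩
    have hz : 0 < (ν * b).re := by
      have habs : ν * b = (‖ν‖ : ℂ) * Complex.exp ((↑(ν.arg + ψ)) * Complex.I) := by
        conv_lhs => rw [← Complex.norm_mul_exp_arg_mul_I ν]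
        rw [hbdef, mul_assoc, ← Complex.exp_add]
        congr 1
        push_cast
        ring
      have hre : (ν * b).re = ‖ν‖ * Real.cos (ν.arg + ψ) := by
        rw [habs]
        exact GammaRayAux.re_ofReal_mul_exp _ _
      rw [hre]
      exact mul_pos (norm_pos_iff.mpr hν) (Real.cos_pos_of_mem_Ioo hsum)
    have hcongr : (∫ r in Ioi (0 : ℝ),
        Complex.exp (-ν * (r * b)) * ((r : ℂ) * b) ^ (w - 1) * b) =
        ∫ r in Ioi (0 : ℝ), Complex.exp (-(ν * b) * r) * (r : ℂ) ^ (w - 1) * b ^ w := by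
      refine setIntegral_congr_fun measurableSet_Ioi fun r hr => ?_
      have e1 : -ν * ((r:ℂ) * b) = -(ν * b) * r := by ring
      rw [e1, mul_assoc, hbsplit r hr, ← mul_assoc]
    rw [hcongr, MeasureTheory.integral_mul_const, GammaRayAux.key hw hz,
      GammaRayAux.mul_cpow_arg hν hb (by rw [hargb]; exact ⟨by linarith, by linarith⟩)]
    rw [div_mul_eq_mul_div, mul_comm (ν ^ w) (b ^ w), ← div_div,
      mul_div_assoc, div_self hbw, mul_one]
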